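/- arXiv:1509.05947 — 3 statements merged into one kernel-verified Lean document; each statement's English description precedes it below -/
import Mathlib

section
/- Let ζ₁,...,ζ_N be complex numbers and define the 2×2 matrix product P_N(z) = ∏_{n=N}^{1} [[1, ζ_n z^{-n}], [-ζ̄_n z^n, 1]] (factors with higher index on the left, z a formal variable). Then the (2,2) entry of P_N is a Laurent polynomial in z with constant term 1, whose coefficient of z^m for m ≥ 1 equals the sum over all multi-indices 0 < j₁ < i₁ < j₂ < i₂ < ... < j_r < i_r ≤ N with ∑(i_s − j_s) = m of the products ζ_{j₁}(−ζ̄_{i₁})···ζ_{j_r}(−ζ̄_{i_r}). -/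
open scoped Matrix

/-- The elementary factor `[[1, ζ_n z^{-n}], [-ζ̄_n z^n, 1]]` over Laurent series. -/
noncomputable def rsM (ζ : ℕ → ℂ) (n : ℕ) : Matrix (Fin 2) (Fin 2) (LaurentSeries ℂ) :=
  !![1, HahnSeries.single (-(n : ℤ)) (ζ n);
     HahnSeries.single (n : ℤ) (-(starRingEnd ℂ) (ζ n)), 1]

/-- The truncated product `P_N(z) = ∏_{n=N}^{1} [[1, ζ_n z^{-n}], [-ζ̄_n z^n, 1]]`,
with higher index on the left. -/
noncomputable def rsP (ζ : ℕ → ℂ) : ℕ → Matrix (Fin 2) (Fin 2) (LaurentSeries ℂ)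
  | 0 => 1
  | n + 1 => rsM ζ (n + 1) * rsP ζ n

/-- The product attached to an increasing list of indices, where the positions `p`
with `p % 2 = 0 ↔ firstIsI` play the role of the `i`'s (factor `-ζ̄`), and the other
positions play the role of the `j`'s (factor `ζ`). -/
noncomputable def rsTermProd (ζ : ℕ → ℂ) (firstIsI : Bool) (L : List ℕ) : ℂ :=
  ∏ p ∈ Finset.range L.length,
    if (p % 2 = 0) ↔ firstIsI = true then -(starRingEnd ℂ) (ζ (L.getD p 0))
    else ζ (L.getD p 0)

/-- The signed sum `∑ i_* − ∑ j_*` attached to an increasing list of indices. -/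
def rsTermSum (firstIsI : Bool) (L : List ℕ) : ℤ :=
  ∑ p ∈ Finset.range L.length,
    if (p % 2 = 0) ↔ firstIsI = true then (L.getD p 0 : ℤ) else -(L.getD p 0 : ℤ)

lemma rsTermSum_nil (f : Bool) : rsTermSum f [] = 0 := by simp [rsTermSum]

lemma rsTermProd_nil (ζ : ℕ → ℂ) (f : Bool) : rsTermProd ζ f [] = 1 := by simp [rsTermProd]

lemma rsTermSum_append (f : Bool) (L : List ℕ) (x : ℕ) :
    rsTermSum f (L ++ [x]) =
      rsTermSum f L + (if (L.length % 2 = 0 ↔ f = true) then (x : ℤ) else -(x : ℤ)) := by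
  unfold rsTermSum
  rw [List.length_append, List.length_singleton, Finset.sum_range_succ]
  congr 1
  · exact Finset.sum_congr rfl fun p hp => by
      rw [List.getD_append _ _ _ _ (Finset.mem_range.mp hp)]
  · rw [List.getD_append_right _ _ _ _ le_rfl, Nat.sub_self]
    simp

lemma rsTermProd_append (ζ : ℕ → ℂ) (f : Bool) (L : List ℕ) (x : ℕ) :
    rsTermProd ζ f (L ++ [x]) =
      rsTermProd ζ f L *
        (if (L.length % 2 = 0 ↔ f = true) then -(starRingEnd ℂ) (ζ x) else ζ x) := by
  unfold rsTermProd
  rw [List.length_append, List.length_singleton, Finset.prod_range_succ]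
  congr 1
  · exact Finset.prod_congr rfl fun p hp => by
      rw [List.getD_append _ _ _ _ (Finset.mem_range.mp hp)]
  · rw [List.getD_append_right _ _ _ _ le_rfl, Nat.sub_self]
    simp

lemma rsTermSum_false_cons_cons (a b : ℕ) (L : List ℕ) :
    rsTermSum false (a :: b :: L) = (b : ℤ) - a + rsTermSum false L := by
  unfold rsTermSum
  rw [show (a :: b :: L).length = L.length + 1 + 1 by simp,
    Finset.sum_range_succ', Finset.sum_range_succ']
  simp [Nat.succ_mod_two_eq_zero_iff, Nat.add_mod_right]
  ring

lemma rsTermSum_false_nonneg : ∀ (L : List ℕ), L.Pairwise (· < ·) → L.length % 2 = 0 →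
    0 ≤ rsTermSum false L
  | [], _, _ => le_of_eq (rsTermSum_nil false).symm
  | [a], _, h => by simp at h
  | a :: b :: L, hs, h => by
    have hab : a < b := (List.pairwise_cons.mp hs).1 b (by simp)
    have hL : L.Pairwise (· < ·) := ((List.pairwise_cons.mp hs).2).of_cons
    have hlen : L.length % 2 = 0 := by simp at h; omega
    have := rsTermSum_false_nonneg L hL hlen
    rw [rsTermSum_false_cons_cons]
    have : (a : ℤ) < b := by exact_mod_cast hab
    omega

lemma rsTermSum_false_pos (L : List ℕ) (hs : L.Pairwise (· < ·)) (h : L.length % 2 = 0)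
    (hne : L ≠ []) : 0 < rsTermSum false L := by
  match L with
  | [] => exact absurd rfl hne
  | [a] => simp at h
  | a :: b :: L =>
    have hab : a < b := (List.pairwise_cons.mp hs).1 b (by simp)
    have hL : L.Pairwise (· < ·) := ((List.pairwise_cons.mp hs).2).of_cons
    have hlen : L.length % 2 = 0 := by simp at h; omega
    have h0 := rsTermSum_false_nonneg L hL hlen
    rw [rsTermSum_false_cons_cons]
    have : (a : ℤ) < b := by exact_mod_cast hab
    omega

lemma sort_insert_max {S : Finset ℕ} {x : ℕ} (hx : ∀ y ∈ S, y < x) :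
    (insert x S).sort (· ≤ ·) = S.sort (· ≤ ·) ++ [x] := by
  have hxS : x ∉ S := fun h => lt_irrefl x (hx x h)
  have hperm : List.Perm ((insert x S).sort (· ≤ ·)) (S.sort (· ≤ ·) ++ [x]) := by
    rw [← Multiset.coe_eq_coe]
    rw [Finset.sort_eq, Finset.insert_val_of_notMem hxS]
    have : ((S.sort (· ≤ ·) ++ [x] : List ℕ) : Multiset ℕ)
        = (S.sort (· ≤ ·) : Multiset ℕ) + {x} :=
      (Multiset.coe_add _ [x]).symm
    rw [this, Finset.sort_eq, add_comm, Multiset.singleton_add]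
  have hsorted : (S.sort (· ≤ ·) ++ [x]).Pairwise (· ≤ ·) := by
    rw [List.pairwise_append]
    refine ⟨Finset.pairwise_sort _ _, List.pairwise_singleton _ x, fun a ha b hb => ?_⟩
    simp at hb; subst hb
    exact le_of_lt (hx a (Finset.mem_sort _ |>.mp ha))
  exact List.Perm.eq_of_pairwise' (Finset.pairwise_sort _ _) hsorted hperm

lemma coeff_finsum {ι : Type*} (s : Finset ι) (F : ι → LaurentSeries ℂ) (k : ℤ) :
    (∑ i ∈ s, F i).coeff k = ∑ i ∈ s, (F i).coeff k :=
  map_sum (HahnSeries.coeff.addMonoidHom k) F s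

lemma rsSum_step (ζ : ℕ → ℂ) (f : Bool) (N c : ℕ) :
    ∑ T ∈ (Finset.Icc 1 (N+1)).powerset.filter (fun T => T.card % 2 = c),
        HahnSeries.single (rsTermSum f (T.sort (· ≤ ·))) (rsTermProd ζ f (T.sort (· ≤ ·)))
    = (∑ T ∈ (Finset.Icc 1 N).powerset.filter (fun T => T.card % 2 = c),
        HahnSeries.single (rsTermSum f (T.sort (· ≤ ·))) (rsTermProd ζ f (T.sort (· ≤ ·))))
    + ∑ T ∈ (Finset.Icc 1 N).powerset.filter (fun T => (T.card + 1) % 2 = c),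
        HahnSeries.single
          (rsTermSum f (T.sort (· ≤ ·))
            + (if (T.card % 2 = 0 ↔ f = true) then ((N+1 : ℕ) : ℤ) else -((N+1 : ℕ) : ℤ)))
          (rsTermProd ζ f (T.sort (· ≤ ·))
            * (if (T.card % 2 = 0 ↔ f = true) then -(starRingEnd ℂ) (ζ (N+1)) else ζ (N+1))) := by
  have hx : (N+1) ∉ Finset.Icc 1 N := by simp
  have hIcc : Finset.Icc 1 (N+1) = insert (N+1) (Finset.Icc 1 N) := by
    ext y; simp; omega
  rw [hIcc, Finset.powerset_insert, Finset.filter_union, Finset.sum_union]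
  · congr 1
    rw [Finset.sum_filter, Finset.sum_image (fun S hS S' hS' h => by
      have hxS : N+1 ∉ S := fun hm => hx (Finset.mem_powerset.mp hS hm)
      have hxS' : N+1 ∉ S' := fun hm => hx (Finset.mem_powerset.mp hS' hm)
      rw [← Finset.erase_insert hxS, ← Finset.erase_insert hxS', h])]
    conv_rhs => rw [Finset.sum_filter]
    apply Finset.sum_congr rfl
    intro S hS
    have hSsub : S ⊆ Finset.Icc 1 N := Finset.mem_powerset.mp hS
    have hxS : N+1 ∉ S := fun hm => hx (hSsub hm)
    have hlt : ∀ y ∈ S, y < N+1 := fun y hy =>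
      Nat.lt_succ_of_le (Finset.mem_Icc.mp (hSsub hy)).2
    have hcard : (insert (N+1) S).card = S.card + 1 := Finset.card_insert_of_notMem hxS
    have hsort : (insert (N+1) S).sort (· ≤ ·) = S.sort (· ≤ ·) ++ [N+1] :=
      sort_insert_max hlt
    have hlen : (S.sort (· ≤ ·)).length = S.card := Finset.length_sort _
    rw [hcard, hsort, rsTermSum_append, rsTermProd_append, hlen]
  · rw [Finset.disjoint_left]
    intro T hT hT'
    have h1 : T ⊆ Finset.Icc 1 N := Finset.mem_powerset.mp (Finset.mem_filter.mp hT).1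
    have h2 := (Finset.mem_filter.mp hT').1
    rw [Finset.mem_image] at h2
    obtain ⟨S, _, rfl⟩ := h2
    exact hx (h1 (Finset.mem_insert_self _ _))

lemma rsP_eq (ζ : ℕ → ℂ) : ∀ (N : ℕ) (a b : Fin 2),
    rsP ζ N a b =
      ∑ T ∈ (Finset.Icc 1 N).powerset.filter
          (fun T => T.card % 2 = if a = b then 0 else 1),
        HahnSeries.single (rsTermSum (decide (b = 0)) (T.sort (· ≤ ·)))
          (rsTermProd ζ (decide (b = 0)) (T.sort (· ≤ ·)))
  | 0, a, b => by
    have h0 : Finset.Icc 1 0 = (∅ : Finset ℕ) := by simp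
    rw [h0]
    by_cases hab : a = b
    · simp [rsP, Matrix.one_apply, hab, rsTermSum_nil, rsTermProd_nil,
        HahnSeries.single_zero_one, Finset.filter_singleton]
    · simp [rsP, Matrix.one_apply, hab, Finset.filter_singleton]
  | N + 1, a, b => by
    show (rsM ζ (N+1) * rsP ζ N) a b = _
    rw [Matrix.mul_apply, Fin.sum_univ_two]
    have rsM00 : ∀ n, rsM ζ n 0 0 = 1 := fun _ => rfl
    have rsM01 : ∀ n, rsM ζ n 0 1 = HahnSeries.single (-(n : ℤ)) (ζ n) := fun _ => rfl
    have rsM10 : ∀ n, rsM ζ n 1 0 = HahnSeries.single (n : ℤ) (-(starRingEnd ℂ) (ζ n)) :=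
      fun _ => rfl
    have rsM11 : ∀ n, rsM ζ n 1 1 = 1 := fun _ => rfl
    fin_cases a <;> fin_cases b <;>
      rw [rsSum_step, rsP_eq ζ N 0, rsP_eq ζ N 1] <;>
      simp only [Fin.mk_zero, Fin.mk_one, Fin.isValue, rsM00, rsM01, rsM10, rsM11,
        one_mul, if_true, decide_true, decide_false,
        show ((0:Fin 2) = 0) = True by simp, show ((0:Fin 2) = 1) = False by simp,
        show ((1:Fin 2) = 0) = False by simp, show ((1:Fin 2) = 1) = True by simp,
        if_false]
    · congr 1
      rw [Finset.mul_sum,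
        Finset.filter_congr (fun T (_ : T ∈ (Finset.Icc 1 N).powerset) =>
          (show ((T.card + 1) % 2 = 0) ↔ (T.card % 2 = 1) by omega))]
      apply Finset.sum_congr rfl
      intro T hT
      have hc : T.card % 2 = 1 := (Finset.mem_filter.mp hT).2
      have hcond : ¬(T.card % 2 = 0 ↔ True) := by simp [hc]
      rw [if_neg hcond, if_neg hcond, HahnSeries.single_mul_single]
      congr 1
      · ring_nf
      · ring_nf
    · congr 1
      rw [Finset.mul_sum,
        Finset.filter_congr (fun T (_ : T ∈ (Finset.Icc 1 N).powerset) =>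
          (show ((T.card + 1) % 2 = 1) ↔ (T.card % 2 = 0) by omega))]
      apply Finset.sum_congr rfl
      intro T hT
      have hc : T.card % 2 = 0 := (Finset.mem_filter.mp hT).2
      have hcond : ¬(T.card % 2 = 0 ↔ false = true) := by simp [hc]
      rw [if_neg hcond, if_neg hcond, HahnSeries.single_mul_single]
      congr 1
      · ring_nf
      · ring_nf
    · rw [add_comm]
      congr 1
      rw [Finset.mul_sum,
        Finset.filter_congr (fun T (_ : T ∈ (Finset.Icc 1 N).powerset) =>
          (show ((T.card + 1) % 2 = 1) ↔ (T.card % 2 = 0) by omega))]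
      apply Finset.sum_congr rfl
      intro T hT
      have hc : T.card % 2 = 0 := (Finset.mem_filter.mp hT).2
      have hcond : (T.card % 2 = 0 ↔ True) := by simp [hc]
      rw [if_pos hcond, if_pos hcond, HahnSeries.single_mul_single]
      congr 1
      · ring_nf
      · ring_nf
    · rw [add_comm]
      congr 1
      rw [Finset.mul_sum,
        Finset.filter_congr (fun T (_ : T ∈ (Finset.Icc 1 N).powerset) =>
          (show ((T.card + 1) % 2 = 0) ↔ (T.card % 2 = 1) by omega))]
      apply Finset.sum_congr rfl
      intro T hT
      have hc : T.card % 2 = 1 := (Finset.mem_filter.mp hT).2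
      have hcond : (T.card % 2 = 0 ↔ false = true) := by simp [hc]
      rw [if_pos hcond, if_pos hcond, HahnSeries.single_mul_single]
      congr 1
      · ring_nf
      · ring

/-- The `(2,2)` entry of the truncated product `P_N` is a Laurent polynomial with
constant term `1`, whose coefficient of `z^m` for `m ≥ 1` is the sum, over all
multi-indices `0 < j₁ < i₁ < ⋯ < j_r < i_r ≤ N` (i.e. subsets of `{1,…,N}` of even
cardinality, listed increasingly, with the `j`'s in the even positions) satisfying
`∑ (i_s − j_s) = m`, of `ζ_{j₁}(−ζ̄_{i₁}) ⋯ ζ_{j_r}(−ζ̄_{i_r})`. -/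
theorem coeff_entry22_of_truncated_product (N : ℕ) (ζ : ℕ → ℂ) :
    ((rsP ζ N) 1 1).coeff 0 = 1 ∧
    ∀ m : ℕ, 1 ≤ m →
      ((rsP ζ N) 1 1).coeff (m : ℤ) =
        ∑ T ∈ (Finset.Icc 1 N).powerset.filter
            (fun T => T.card % 2 = 0 ∧ rsTermSum false (T.sort (· ≤ ·)) = (m : ℤ)),
          rsTermProd ζ false (T.sort (· ≤ ·)) := by
  have key := rsP_eq ζ N 1 1
  simp only [show (decide ((1 : Fin 2) = 0)) = false from rfl,
    show ((1 : Fin 2) = 1) = True by simp, if_true] at key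
  constructor
  · rw [key, coeff_finsum, Finset.sum_eq_single ∅]
    · simp [Finset.sort_empty, rsTermSum_nil, rsTermProd_nil, HahnSeries.coeff_single]
    · intro T hT hne
      have h1 : T.card % 2 = 0 := (Finset.mem_filter.mp hT).2
      have hnil : T.sort (· ≤ ·) ≠ [] := fun h =>
        hne (Finset.card_eq_zero.mp (by rw [← Finset.length_sort (· ≤ ·) (s := T), h]; rfl))
      have hpos := rsTermSum_false_pos (T.sort (· ≤ ·)) (Finset.sortedLT_sort T).pairwise
        (by rw [Finset.length_sort]; exact h1) hnil
      rw [HahnSeries.coeff_single, if_neg (by omega)]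
    · intro h
      exact absurd (Finset.mem_filter.mpr ⟨Finset.empty_mem_powerset _, by simp⟩) h
  · intro m _
    rw [key, coeff_finsum]
    rw [show (Finset.Icc 1 N).powerset.filter
          (fun T => T.card % 2 = 0 ∧ rsTermSum false (T.sort (· ≤ ·)) = (m : ℤ))
        = ((Finset.Icc 1 N).powerset.filter (fun T => T.card % 2 = 0)).filter
          (fun T => rsTermSum false (T.sort (· ≤ ·)) = (m : ℤ)) by
      rw [Finset.filter_filter]]
    conv_rhs => rw [Finset.sum_filter]
    apply Finset.sum_congr rfl
    intro T _
    rw [HahnSeries.coeff_single]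
    by_cases h : rsTermSum false (T.sort (· ≤ ·)) = (m : ℤ)
    · rw [if_pos h, if_pos h.symm]
    · rw [if_neg h, if_neg (fun hh => h hh.symm)]
end

section
/- In the setting of the main theorem, the coefficient ξ_n of z^n in γ₂/δ₂ satisfies ξ_n = (−ζ̄_n)·∏_{s=1}^{n−1}(1 + |ζ_s|²) + Q_n, where Q_n is a polynomial in ζ_s, ζ̄_s for s < n. In particular ξ₁ = −ζ̄₁ and ξ₂ = −ζ̄₂(1+|ζ₁|²). -/
open scoped Matrix

/-- The coefficient `ξ_n` of `z^n` in `γ₂/δ₂` (quotient of the `(2,1)` and `(2,2)`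
entries of the truncated product at level `N`). -/
noncomputable def rsXi (N : ℕ) (ζ : ℕ → ℂ) (n : ℕ) : ℂ :=
  ((rsP ζ N) 1 0 * ((rsP ζ N) 1 1)⁻¹).coeff (n : ℤ)

/-! ### Auxiliary development -/

/-- The generic quadruple `(A_m, B_m, U_m, V_m)` of power series satisfying the
row recurrences of the truncated products; `U_m, V_m` are `z^{m+1}` times the top
row entries. -/
noncomputable def rsQ (S : Type*) [CommRing S] (ζ η : ℕ → S) :
    ℕ → PowerSeries S × PowerSeries S × PowerSeries S × PowerSeries S
  | 0 => (0, 1, PowerSeries.X, 0)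
  | m + 1 =>
      ((rsQ S ζ η m).1 - PowerSeries.C (η (m+1)) * (rsQ S ζ η m).2.2.1,
       (rsQ S ζ η m).2.1 - PowerSeries.C (η (m+1)) * (rsQ S ζ η m).2.2.2,
       PowerSeries.X * (rsQ S ζ η m).2.2.1
         + PowerSeries.C (ζ (m+1)) * PowerSeries.X * (rsQ S ζ η m).1,
       PowerSeries.X * (rsQ S ζ η m).2.2.2
         + PowerSeries.C (ζ (m+1)) * PowerSeries.X * (rsQ S ζ η m).2.1)

theorem rsQ_constantCoeff {S : Type*} [CommRing S] (ζ η : ℕ → S) (m : ℕ) :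
    PowerSeries.constantCoeff (rsQ S ζ η m).2.1 = 1 ∧
    PowerSeries.constantCoeff (rsQ S ζ η m).2.2.2 = 0 := by
  induction m with
  | zero => simp [rsQ]
  | succ m ih => simp [rsQ, ih.1, ih.2]

theorem rsQ_congr {S : Type*} [CommRing S] (ζ₁ η₁ ζ₂ η₂ : ℕ → S) (m : ℕ)
    (h : ∀ s ≤ m, ζ₁ s = ζ₂ s ∧ η₁ s = η₂ s) :
    rsQ S ζ₁ η₁ m = rsQ S ζ₂ η₂ m := by
  induction m with
  | zero => simp [rsQ]
  | succ m ih =>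
    have hrec := ih (fun s hs => h s (hs.trans (Nat.le_succ m)))
    simp only [rsQ, hrec, (h (m+1) le_rfl).1, (h (m+1) le_rfl).2]

theorem rsQ_map {S T : Type*} [CommRing S] [CommRing T] (φ : S →+* T) (ζ η : ℕ → S) (m : ℕ) :
    PowerSeries.map φ (rsQ S ζ η m).1 = (rsQ T (φ ∘ ζ) (φ ∘ η) m).1 ∧
    PowerSeries.map φ (rsQ S ζ η m).2.1 = (rsQ T (φ ∘ ζ) (φ ∘ η) m).2.1 ∧
    PowerSeries.map φ (rsQ S ζ η m).2.2.1 = (rsQ T (φ ∘ ζ) (φ ∘ η) m).2.2.1 ∧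
    PowerSeries.map φ (rsQ S ζ η m).2.2.2 = (rsQ T (φ ∘ ζ) (φ ∘ η) m).2.2.2 := by
  induction m with
  | zero => simp [rsQ]
  | succ m ih =>
    obtain ⟨h1, h2, h3, h4⟩ := ih
    simp [rsQ, h1, h2, h3, h4, Function.comp]

/-- The "Wronskian" identity: `U_m B_m - V_m A_m = (∏ (1+ζ_s η_s)) X^{m+1}`. -/
theorem rsQ_W {S : Type*} [CommRing S] (ζ η : ℕ → S) (m : ℕ) :
    (rsQ S ζ η m).2.2.1 * (rsQ S ζ η m).2.1 - (rsQ S ζ η m).2.2.2 * (rsQ S ζ η m).1 =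
      PowerSeries.C (∏ s ∈ Finset.Ico 1 (m+1), (1 + ζ s * η s)) *
        PowerSeries.X ^ (m+1) := by
  induction m with
  | zero => simp [rsQ]
  | succ m ih =>
    rw [Finset.prod_Ico_succ_top (Nat.succ_le_succ (Nat.zero_le m))]
    simp only [rsQ, map_mul, map_add, map_one, pow_succ]
    linear_combination (PowerSeries.X *
      (1 + PowerSeries.C (ζ (m+1)) * PowerSeries.C (η (m+1)))) * ih

theorem single_eq_C_mul (r : ℂ) (k : ℤ) :
    (HahnSeries.single k r : LaurentSeries ℂ) = HahnSeries.C r * HahnSeries.single k 1 := by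
  rw [HahnSeries.C_apply, HahnSeries.single_mul_single, zero_add, mul_one]

/-- Link between the power-series quadruple and the entries of `rsP`. -/
theorem rsQ_rsP (ζ : ℕ → ℂ) (m : ℕ) :
    HahnSeries.ofPowerSeries ℤ ℂ (rsQ ℂ ζ (fun s => (starRingEnd ℂ) (ζ s)) m).1
        = rsP ζ m 1 0 ∧
    HahnSeries.ofPowerSeries ℤ ℂ (rsQ ℂ ζ (fun s => (starRingEnd ℂ) (ζ s)) m).2.1
        = rsP ζ m 1 1 ∧
    HahnSeries.ofPowerSeries ℤ ℂ (rsQ ℂ ζ (fun s => (starRingEnd ℂ) (ζ s)) m).2.2.1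
        = HahnSeries.single ((m : ℤ) + 1) 1 * rsP ζ m 0 0 ∧
    HahnSeries.ofPowerSeries ℤ ℂ (rsQ ℂ ζ (fun s => (starRingEnd ℂ) (ζ s)) m).2.2.2
        = HahnSeries.single ((m : ℤ) + 1) 1 * rsP ζ m 0 1 := by
  induction m with
  | zero =>
    simp [rsQ, rsP, Matrix.one_apply, HahnSeries.ofPowerSeries_X]
  | succ m ih =>
    obtain ⟨h1, h2, h3, h4⟩ := ih
    have hP : ∀ i j, rsP ζ (m+1) i j =
        rsM ζ (m+1) i 0 * rsP ζ m 0 j + rsM ζ (m+1) i 1 * rsP ζ m 1 j := by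
      intro i j
      simp [rsP, Matrix.mul_apply, Fin.sum_univ_two]
    have hM00 : rsM ζ (m+1) 0 0 = 1 := by simp [rsM]
    have hM01 : rsM ζ (m+1) 0 1 = HahnSeries.single (-((m:ℤ)+1)) (ζ (m+1)) := by
      simp [rsM]
    have hM10 : rsM ζ (m+1) 1 0 =
        HahnSeries.single ((m:ℤ)+1) (-(starRingEnd ℂ) (ζ (m+1))) := by
      simp [rsM]
    have hM11 : rsM ζ (m+1) 1 1 = 1 := by simp [rsM]
    have e1 : (HahnSeries.single (1:ℤ) 1 : LaurentSeries ℂ) * HahnSeries.single ((m:ℤ)+1) 1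
        = HahnSeries.single ((m:ℤ)+1+1) 1 := by
      rw [show ((m:ℤ)+1+1) = 1 + ((m:ℤ)+1) by ring, HahnSeries.single_mul_single, one_mul]
    have e2 : (HahnSeries.single ((m:ℤ)+1+1) 1 : LaurentSeries ℂ)
        * HahnSeries.single (-((m:ℤ)+1)) 1 = HahnSeries.single (1:ℤ) 1 := by
      rw [HahnSeries.single_mul_single, one_mul]
      congr 1
      ring
    refine ⟨?_, ?_, ?_, ?_⟩
    · rw [hP, hM10, hM11]
      simp only [rsQ, map_sub, map_mul, HahnSeries.ofPowerSeries_C, h1, h3]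
      rw [single_eq_C_mul (-(starRingEnd ℂ) (ζ (m+1))) ((m:ℤ)+1), map_neg]
      ring
    · rw [hP, hM10, hM11]
      simp only [rsQ, map_sub, map_mul, HahnSeries.ofPowerSeries_C, h2, h4]
      rw [single_eq_C_mul (-(starRingEnd ℂ) (ζ (m+1))) ((m:ℤ)+1), map_neg]
      ring
    · rw [hP, hM00, hM01]
      simp only [rsQ, map_add, map_mul, HahnSeries.ofPowerSeries_C,
        HahnSeries.ofPowerSeries_X, h1, h3]
      rw [single_eq_C_mul (ζ (m+1)) (-((m:ℤ)+1))]
      push_cast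
      linear_combination (rsP ζ m 0 0) * e1
        - (HahnSeries.C (ζ (m+1)) * rsP ζ m 1 0) * e2
    · rw [hP, hM00, hM01]
      simp only [rsQ, map_add, map_mul, HahnSeries.ofPowerSeries_C,
        HahnSeries.ofPowerSeries_X, h2, h4]
      rw [single_eq_C_mul (ζ (m+1)) (-((m:ℤ)+1))]
      push_cast
      linear_combination (rsP ζ m 0 1) * e1
        - (HahnSeries.C (ζ (m+1)) * rsP ζ m 1 1) * e2

noncomputable def rsA (ζ : ℕ → ℂ) (m : ℕ) : PowerSeries ℂ :=
  (rsQ ℂ ζ (fun s => (starRingEnd ℂ) (ζ s)) m).1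

noncomputable def rsB (ζ : ℕ → ℂ) (m : ℕ) : PowerSeries ℂ :=
  (rsQ ℂ ζ (fun s => (starRingEnd ℂ) (ζ s)) m).2.1

noncomputable def rsF (ζ : ℕ → ℂ) (m : ℕ) : PowerSeries ℂ := rsA ζ m * (rsB ζ m)⁻¹

noncomputable def rsD (ζ : ℕ → ℂ) (m : ℕ) : ℂ :=
  ∏ s ∈ Finset.Ico 1 (m+1), (1 + ζ s * (starRingEnd ℂ) (ζ s))

variable (ζ : ℕ → ℂ)

theorem rsB_const (m : ℕ) : PowerSeries.constantCoeff (rsB ζ m) = 1 :=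
  (rsQ_constantCoeff _ _ m).1

theorem rsB_ne (m : ℕ) : rsB ζ m ≠ 0 := fun h => by
  have := rsB_const ζ m; rw [h] at this; simp at this

theorem rsB_const_ne (m : ℕ) : PowerSeries.constantCoeff (rsB ζ m) ≠ 0 := by
  rw [rsB_const]; exact one_ne_zero

theorem rsF_succ (m : ℕ) :
    rsF ζ (m+1) = rsF ζ m -
      PowerSeries.C ((starRingEnd ℂ) (ζ (m+1)) * rsD ζ m) * PowerSeries.X ^ (m+1) *
        (rsB ζ m * rsB ζ (m+1))⁻¹ := by
  have hb : rsB ζ m * (rsB ζ m)⁻¹ = 1 := PowerSeries.mul_inv_cancel _ (rsB_const_ne ζ m)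
  have hb' : rsB ζ (m+1) * (rsB ζ (m+1))⁻¹ = 1 :=
    PowerSeries.mul_inv_cancel _ (rsB_const_ne ζ (m+1))
  have hbb : (rsB ζ m * rsB ζ (m+1)) * (rsB ζ m * rsB ζ (m+1))⁻¹ = 1 :=
    PowerSeries.mul_inv_cancel _ (by
      rw [map_mul, rsB_const, rsB_const, one_mul]; exact one_ne_zero)
  have key : rsA ζ (m+1) * rsB ζ m = rsA ζ m * rsB ζ (m+1) -
      PowerSeries.C ((starRingEnd ℂ) (ζ (m+1))) *
        (PowerSeries.C (rsD ζ m) * PowerSeries.X ^ (m+1)) := by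
    have hW := rsQ_W ζ (fun s => (starRingEnd ℂ) (ζ s)) m
    simp only [rsA, rsB, rsQ, rsD]
    linear_combination (-(PowerSeries.C ((starRingEnd ℂ) (ζ (m+1))))) * hW
  have hne : rsB ζ m * rsB ζ (m+1) ≠ 0 :=
    mul_ne_zero (rsB_ne ζ m) (rsB_ne ζ (m+1))
  apply mul_right_cancel₀ hne
  unfold rsF
  rw [map_mul]
  linear_combination (rsA ζ (m+1) * rsB ζ m) * hb' -
    (rsA ζ m * rsB ζ (m+1)) * hb +
    (PowerSeries.C ((starRingEnd ℂ) (ζ (m+1))) * PowerSeries.C (rsD ζ m)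
      * PowerSeries.X ^ (m+1)) * hbb + key

theorem coeff_rsF_succ_of_le {k m : ℕ} (h : k ≤ m) :
    PowerSeries.coeff k (rsF ζ (m+1)) = PowerSeries.coeff k (rsF ζ m) := by
  rw [rsF_succ, map_sub]
  have hdvd : (PowerSeries.X : PowerSeries ℂ) ^ (m+1) ∣
      PowerSeries.C ((starRingEnd ℂ) (ζ (m+1)) * rsD ζ m) * PowerSeries.X ^ (m+1) *
        (rsB ζ m * rsB ζ (m+1))⁻¹ :=
    ⟨PowerSeries.C ((starRingEnd ℂ) (ζ (m+1)) * rsD ζ m) *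
      (rsB ζ m * rsB ζ (m+1))⁻¹, by ring⟩
  rw [PowerSeries.X_pow_dvd_iff.mp hdvd k (by omega), sub_zero]

theorem coeff_rsF_succ_top (m : ℕ) :
    PowerSeries.coeff (m+1) (rsF ζ (m+1)) =
      PowerSeries.coeff (m+1) (rsF ζ m) - (starRingEnd ℂ) (ζ (m+1)) * rsD ζ m := by
  rw [rsF_succ, map_sub]
  congr 1
  rw [show PowerSeries.C ((starRingEnd ℂ) (ζ (m+1)) * rsD ζ m) * PowerSeries.X ^ (m+1) *
        (rsB ζ m * rsB ζ (m+1))⁻¹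
      = PowerSeries.X ^ (m+1) * (PowerSeries.C ((starRingEnd ℂ) (ζ (m+1)) * rsD ζ m) *
        (rsB ζ m * rsB ζ (m+1))⁻¹) by ring]
  have h := PowerSeries.coeff_X_pow_mul (PowerSeries.C ((starRingEnd ℂ) (ζ (m+1)) * rsD ζ m) *
        (rsB ζ m * rsB ζ (m+1))⁻¹) (m+1) 0
  rw [zero_add] at h
  rw [h, PowerSeries.coeff_zero_eq_constantCoeff, map_mul, PowerSeries.constantCoeff_C,
    PowerSeries.constantCoeff_inv, map_mul, rsB_const, rsB_const, one_mul, inv_one, mul_one]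

theorem coeff_rsF_of_le {n M : ℕ} (h : n ≤ M) :
    PowerSeries.coeff n (rsF ζ M) = PowerSeries.coeff n (rsF ζ n) := by
  induction M with
  | zero => interval_cases n; rfl
  | succ M ih =>
    rcases Nat.lt_or_ge n (M+1) with hlt | hge
    · rw [coeff_rsF_succ_of_le ζ (by omega), ih (by omega)]
    · have : n = M + 1 := by omega
      subst this; rfl

theorem rsXi_eq_coeff (N n : ℕ) :
    rsXi N ζ n = PowerSeries.coeff n (rsF ζ N) := by
  obtain ⟨h1', h2', -, -⟩ := rsQ_rsP ζ N
  have h1 : HahnSeries.ofPowerSeries ℤ ℂ (rsA ζ N) = rsP ζ N 1 0 := h1'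
  have h2 : HahnSeries.ofPowerSeries ℤ ℂ (rsB ζ N) = rsP ζ N 1 1 := h2'
  have hinv : ((rsP ζ N) 1 1)⁻¹ = HahnSeries.ofPowerSeries ℤ ℂ ((rsB ζ N)⁻¹) := by
    rw [← h2]
    refine inv_eq_of_mul_eq_one_right ?_
    rw [← map_mul, PowerSeries.mul_inv_cancel _ (rsB_const_ne ζ N), map_one]
  rw [rsXi, ← h1, hinv, ← map_mul, HahnSeries.ofPowerSeries_apply_coeff]
  rfl

theorem rsXi_eq (N k : ℕ) (h : k + 1 ≤ N) :
    rsXi N ζ (k+1) =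
      PowerSeries.coeff (k+1) (rsF ζ k) - (starRingEnd ℂ) (ζ (k+1)) * rsD ζ k := by
  rw [rsXi_eq_coeff, coeff_rsF_of_le ζ h, coeff_rsF_succ_top]

theorem rsD_eq (m : ℕ) :
    rsD ζ m = ∏ s ∈ Finset.Ico 1 (m+1), ((1 + Complex.normSq (ζ s) : ℝ) : ℂ) := by
  refine Finset.prod_congr rfl fun s _ => ?_
  push_cast
  rw [Complex.mul_conj]

/-! ### Main theorem -/

/-- Triangularity: `ξ_n = (−ζ̄_n)·∏_{s=1}^{n−1}(1+|ζ_s|²) + Q_n` where `Q_n` is a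
polynomial in `ζ_s, ζ̄_s` for `s < n` (the variable `(s, true)` evaluates to `ζ_s`
and `(s, false)` to `ζ̄_s`); in particular `ξ₁ = −ζ̄₁` and
`ξ₂ = −ζ̄₂(1+|ζ₁|²)`. -/
theorem xi_triangular (N n : ℕ) (hn : 1 ≤ n) (hnN : n ≤ N) :
    (∃ Q : MvPolynomial (Fin n × Bool) ℂ,
      ∀ ζ : ℕ → ℂ,
        rsXi N ζ n =
          (-(starRingEnd ℂ) (ζ n)) *
              (∏ s ∈ Finset.Ico 1 n, ((1 + Complex.normSq (ζ s) : ℝ) : ℂ)) +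
            MvPolynomial.eval
              (fun v : Fin n × Bool =>
                if v.2 then ζ (v.1 : ℕ) else (starRingEnd ℂ) (ζ (v.1 : ℕ))) Q) ∧
    (∀ ζ : ℕ → ℂ, rsXi N ζ 1 = -(starRingEnd ℂ) (ζ 1)) ∧
    (∀ ζ : ℕ → ℂ, 2 ≤ N →
      rsXi N ζ 2 =
        -(starRingEnd ℂ) (ζ 2) * ((1 + Complex.normSq (ζ 1) : ℝ) : ℂ)) := by
  have hF0 : ∀ ζ : ℕ → ℂ, rsF ζ 0 = 0 := by
    intro ζ
    have : rsA ζ 0 = 0 := rfl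
    rw [rsF, this, zero_mul]
  refine ⟨?_, ?_, ?_⟩
  · obtain ⟨k, rfl⟩ : ∃ k, n = k + 1 := ⟨n - 1, by omega⟩
    classical
    set R := MvPolynomial (Fin (k+1) × Bool) ℂ with hR
    set ζ' : ℕ → R := fun s => if h : s < k+1 then MvPolynomial.X (⟨s, h⟩, true) else 0
      with hζ'
    set η' : ℕ → R := fun s => if h : s < k+1 then MvPolynomial.X (⟨s, h⟩, false) else 0
      with hη'
    refine ⟨PowerSeries.coeff (k+1) ((rsQ R ζ' η' k).1 *
      PowerSeries.invOfUnit (rsQ R ζ' η' k).2.1 1), ?_⟩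
    intro ζ
    set φ : R →+* ℂ :=
      (MvPolynomial.eval fun v : Fin (k+1) × Bool =>
        if v.2 then ζ (v.1 : ℕ) else (starRingEnd ℂ) (ζ (v.1 : ℕ))) with hφ
    have hmap := rsQ_map φ ζ' η' k
    have hcongr : rsQ ℂ (φ ∘ ζ') (φ ∘ η') k
        = rsQ ℂ ζ (fun s => (starRingEnd ℂ) (ζ s)) k := by
      refine rsQ_congr _ _ _ _ k fun s hs => ?_
      have hs' : s < k + 1 := by omega
      constructor
      · simp only [Function.comp_apply, hζ', hφ, dif_pos hs']
        rw [MvPolynomial.eval_X]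
        simp
      · simp only [Function.comp_apply, hη', hφ, dif_pos hs']
        rw [MvPolynomial.eval_X]
        simp
    have hA : PowerSeries.map φ (rsQ R ζ' η' k).1 = rsA ζ k := by
      rw [hmap.1, hcongr]; rfl
    have hB : PowerSeries.map φ (rsQ R ζ' η' k).2.1 = rsB ζ k := by
      rw [hmap.2.1, hcongr]; rfl
    have hInv : PowerSeries.map φ (PowerSeries.invOfUnit (rsQ R ζ' η' k).2.1 1)
        = (rsB ζ k)⁻¹ := by
      have h1 : (rsQ R ζ' η' k).2.1 * PowerSeries.invOfUnit (rsQ R ζ' η' k).2.1 1 = 1 :=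
        PowerSeries.mul_invOfUnit _ 1 (by
          rw [(rsQ_constantCoeff ζ' η' k).1, Units.val_one])
      apply mul_left_cancel₀ (rsB_ne ζ k)
      rw [PowerSeries.mul_inv_cancel _ (rsB_const_ne ζ k), ← hB, ← map_mul, h1, map_one]
    have hQ : φ (PowerSeries.coeff (k+1) ((rsQ R ζ' η' k).1 *
        PowerSeries.invOfUnit (rsQ R ζ' η' k).2.1 1))
        = PowerSeries.coeff (k+1) (rsF ζ k) := by
      rw [← PowerSeries.coeff_map, map_mul, hA, hInv]; rfl
    rw [rsXi_eq ζ N k hnN, ← rsD_eq]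
    rw [hφ] at hQ
    rw [hQ]
    ring
  · intro ζ
    have h1 : (1:ℕ) ≤ N := le_trans hn hnN
    rw [show (1:ℕ) = 0 + 1 from rfl, rsXi_eq ζ N 0 h1, hF0, map_zero]
    have : rsD ζ 0 = 1 := by simp [rsD]
    rw [this]
    ring
  · intro ζ hN
    rw [show (2:ℕ) = 1 + 1 from rfl, rsXi_eq ζ N 1 hN]
    have hB1 : rsB ζ 1 = 1 := by
      simp [rsB, rsQ]
    have hA1 : rsA ζ 1 = -(PowerSeries.C ((starRingEnd ℂ) (ζ 1)) * PowerSeries.X) := by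
      simp [rsA, rsQ]
    have hF1 : rsF ζ 1 = -(PowerSeries.C ((starRingEnd ℂ) (ζ 1)) * PowerSeries.X) := by
      have hone : (1 : PowerSeries ℂ)⁻¹ = 1 := by
        have := PowerSeries.mul_inv_cancel (1 : PowerSeries ℂ) (by simp)
        rwa [one_mul] at this
      rw [rsF, hB1, hA1, hone, mul_one]
    rw [hF1]
    have hc : PowerSeries.coeff 2
        (-(PowerSeries.C ((starRingEnd ℂ) (ζ 1)) * PowerSeries.X)) = 0 := by
      simp [PowerSeries.coeff_X]
    rw [hc]
    have hD1 : rsD ζ 1 = ((1 + Complex.normSq (ζ 1) : ℝ) : ℂ) := by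
      rw [rsD]
      rw [show Finset.Ico 1 2 = {1} from rfl, Finset.prod_singleton]
      push_cast
      rw [Complex.mul_conj]
    rw [hD1]
    ring
end

section
/- The map (ζ₁,...,ζ_N) ↦ (ξ₁,...,ξ_N), where ξ_n is the n-th coefficient of γ₂/δ₂ from the truncated product at level N, is a bijection from ℂ^N to ℂ^N. -/
open scoped Matrix

/-- Extension of a tuple `(ζ₁, …, ζ_N)` to a function `ℕ → ℂ` (zero elsewhere). -/
noncomputable def rsExt (N : ℕ) (ζ : Fin N → ℂ) : ℕ → ℂ := fun k =>
  if h : 1 ≤ k ∧ k ≤ N then ζ ⟨k - 1, by omega⟩ else 0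

namespace Xi
open HahnSeries

lemma single_mul_coeff (a : ℤ) (r : ℂ) (x : LaurentSeries ℂ) (k : ℤ) :
    (single a r * x).coeff k = r * x.coeff (k - a) := by
  conv_lhs => rw [show k = (k - a) + a by ring]
  rw [coeff_single_mul_add]

/-- constant in the determinant -/
noncomputable def cdet (ζ : ℕ → ℂ) (m : ℕ) : ℂ :=
  ∏ s ∈ Finset.range m, (1 + ζ (s+1) * (starRingEnd ℂ) (ζ (s+1)))

lemma cdet_ne_zero (ζ : ℕ → ℂ) (m : ℕ) : cdet ζ m ≠ 0 := by
  apply Finset.prod_ne_zero_iff.2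
  intro s _
  have h : (1 : ℂ) + ζ (s+1) * (starRingEnd ℂ) (ζ (s+1))
      = ((1 + Complex.normSq (ζ (s+1)) : ℝ) : ℂ) := by
    rw [Complex.mul_conj]; push_cast; ring
  rw [h]
  have : (0:ℝ) < 1 + Complex.normSq (ζ (s+1)) :=
    add_pos_of_pos_of_nonneg one_pos (Complex.normSq_nonneg _)
  exact_mod_cast this.ne'

lemma exists_ps {u : LaurentSeries ℂ} (h : ∀ k : ℤ, k < 0 → u.coeff k = 0) :
    ∃ p : PowerSeries ℂ, u = (p : LaurentSeries ℂ)
      ∧ PowerSeries.constantCoeff p = u.coeff 0 := by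
  refine ⟨PowerSeries.mk fun n => u.coeff n, ?_, by
    simp [PowerSeries.constantCoeff_mk]⟩
  ext k
  rw [PowerSeries.coeff_coe]
  split_ifs with hk
  · exact h k hk
  · rw [PowerSeries.coeff_mk]
    congr 1
    omega

lemma inv_coeff {u : LaurentSeries ℂ} (h : ∀ k : ℤ, k < 0 → u.coeff k = 0)
    (h1 : u.coeff 0 = 1) :
    (∀ k : ℤ, k < 0 → (u⁻¹).coeff k = 0) ∧ (u⁻¹).coeff 0 = 1 := by
  obtain ⟨p, hp, hc⟩ := exists_ps h
  have hunit : IsUnit p := PowerSeries.isUnit_iff_constantCoeff.2 (by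
    rw [hc, h1]; exact isUnit_one)
  obtain ⟨q, hq⟩ : ∃ q, p * q = 1 := by
    obtain ⟨v, hv⟩ := hunit
    exact ⟨(↑v⁻¹ : PowerSeries ℂ), by rw [← hv, Units.mul_inv]⟩
  have hmul : u * (q : LaurentSeries ℂ) = 1 := by
    rw [hp, ← PowerSeries.coe_mul, hq, PowerSeries.coe_one]
  have hinv : u⁻¹ = (q : LaurentSeries ℂ) := inv_eq_of_mul_eq_one_right hmul
  have hq0 : PowerSeries.constantCoeff q = 1 := by
    have := congrArg (PowerSeries.constantCoeff) hq
    rw [map_mul, map_one, hc, h1, one_mul] at this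
    exact this
  constructor
  · intro k hk
    rw [hinv, PowerSeries.coeff_coe, if_pos hk]
  · rw [hinv, PowerSeries.coeff_coe, if_neg (by omega)]
    simpa using hq0

lemma mul_coeff_facts {u v : LaurentSeries ℂ}
    (hu : ∀ k : ℤ, k < 0 → u.coeff k = 0) (hu1 : u.coeff 0 = 1)
    (hv : ∀ k : ℤ, k < 0 → v.coeff k = 0) (hv1 : v.coeff 0 = 1) :
    (∀ k : ℤ, k < 0 → (u*v).coeff k = 0) ∧ (u*v).coeff 0 = 1 := by
  obtain ⟨p, hp, hpc⟩ := exists_ps hu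
  obtain ⟨q, hq, hqc⟩ := exists_ps hv
  have hm : u * v = ((p*q : PowerSeries ℂ) : LaurentSeries ℂ) := by
    rw [hp, hq, PowerSeries.coe_mul]
  constructor
  · intro k hk
    rw [hm, PowerSeries.coeff_coe, if_pos hk]
  · rw [hm, PowerSeries.coeff_coe, if_neg (by omega)]
    have : PowerSeries.constantCoeff (p*q) = 1 := by
      rw [map_mul, hpc, hqc, hu1, hv1, one_mul]
    simpa using this

variable (ζ : ℕ → ℂ)

lemma A_succ (m : ℕ) : rsP ζ (m+1) 0 0
    = rsP ζ m 0 0 + single (-((m+1 : ℕ) : ℤ)) (ζ (m+1)) * rsP ζ m 1 0 := by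
  show (rsM ζ (m+1) * rsP ζ m) 0 0 = _
  rw [Matrix.mul_apply, Fin.sum_univ_two]
  simp [rsM]

lemma B_succ (m : ℕ) : rsP ζ (m+1) 0 1
    = rsP ζ m 0 1 + single (-((m+1 : ℕ) : ℤ)) (ζ (m+1)) * rsP ζ m 1 1 := by
  show (rsM ζ (m+1) * rsP ζ m) 0 1 = _
  rw [Matrix.mul_apply, Fin.sum_univ_two]
  simp [rsM]

lemma G_succ (m : ℕ) : rsP ζ (m+1) 1 0
    = rsP ζ m 1 0 + single (((m+1 : ℕ) : ℤ)) (-(starRingEnd ℂ) (ζ (m+1))) * rsP ζ m 0 0 := by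
  show (rsM ζ (m+1) * rsP ζ m) 1 0 = _
  rw [Matrix.mul_apply, Fin.sum_univ_two]
  simp [rsM]; ring

lemma U_succ (m : ℕ) : rsP ζ (m+1) 1 1
    = rsP ζ m 1 1 + single (((m+1 : ℕ) : ℤ)) (-(starRingEnd ℂ) (ζ (m+1))) * rsP ζ m 0 1 := by
  show (rsM ζ (m+1) * rsP ζ m) 1 1 = _
  rw [Matrix.mul_apply, Fin.sum_univ_two]
  simp [rsM]; ring

lemma supp (m : ℕ) :
    (∀ k : ℤ, k < -(m:ℤ) → (rsP ζ m 0 0).coeff k = 0) ∧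
    (∀ k : ℤ, k < -(m:ℤ) → (rsP ζ m 0 1).coeff k = 0) ∧
    (∀ k : ℤ, k < 1 → (rsP ζ m 1 0).coeff k = 0) ∧
    (∀ k : ℤ, k < 0 → (rsP ζ m 1 1).coeff k = 0) ∧ (rsP ζ m 1 1).coeff 0 = 1 := by
  induction m with
  | zero =>
    refine ⟨?_, ?_, ?_, ?_, ?_⟩ <;> simp [rsP, Matrix.one_apply, coeff_one] <;> intro k hk <;> omega
  | succ m ih =>
    obtain ⟨ha, hb, hg, hu, hu0⟩ := ih
    refine ⟨?_, ?_, ?_, ?_, ?_⟩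
    · intro k hk
      rw [A_succ, coeff_add, single_mul_coeff, ha k (by push_cast at hk ⊢; omega),
        hg _ (by push_cast at hk ⊢; omega), zero_add, mul_zero]
    · intro k hk
      rw [B_succ, coeff_add, single_mul_coeff, hb k (by push_cast at hk ⊢; omega),
        hu _ (by push_cast at hk ⊢; omega), zero_add, mul_zero]
    · intro k hk
      rw [G_succ, coeff_add, single_mul_coeff, hg k (by push_cast at hk ⊢; omega),
        ha _ (by push_cast at hk ⊢; omega), zero_add, mul_zero]
    · intro k hk
      rw [U_succ, coeff_add, single_mul_coeff, hu k (by push_cast at hk ⊢; omega),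
        hb _ (by push_cast at hk ⊢; omega), zero_add, mul_zero]
    · rw [U_succ, coeff_add, single_mul_coeff, hu0, hb _ (by push_cast; omega),
        mul_zero, add_zero]

lemma U_ne_zero (m : ℕ) : rsP ζ m 1 1 ≠ 0 := by
  intro h
  have := (supp ζ m).2.2.2.2
  rw [h] at this
  simp at this

lemma det_rsP (m : ℕ) : (rsP ζ m).det = single (0 : ℤ) (cdet ζ m) := by
  induction m with
  | zero => simp [rsP, cdet, single_zero_one]
  | succ m ih =>
    rw [show rsP ζ (m+1) = rsM ζ (m+1) * rsP ζ m from rfl, Matrix.det_mul, ih]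
    have hM : (rsM ζ (m+1)).det
        = single (0:ℤ) (1 + ζ (m+1) * (starRingEnd ℂ) (ζ (m+1))) := by
      rw [rsM, Matrix.det_fin_two_of, single_mul_single]
      rw [show (-((m+1:ℕ):ℤ)) + ((m+1:ℕ):ℤ) = 0 by ring]
      ext k
      by_cases hk : k = (0:ℤ)
      · subst hk
        simp [coeff_sub, coeff_single_same, coeff_one]
        try ring
      · simp [coeff_sub, coeff_single_of_ne hk, coeff_one, hk]
    rw [hM, single_mul_single, add_zero, cdet, cdet, Finset.prod_range_succ]
    congr 1
    ring

lemma f_diff (m : ℕ) :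
    rsP ζ (m+1) 1 0 * (rsP ζ (m+1) 1 1)⁻¹ - rsP ζ m 1 0 * (rsP ζ m 1 1)⁻¹
    = single (((m+1:ℕ)):ℤ) (-(starRingEnd ℂ) (ζ (m+1)) * cdet ζ m)
      * (rsP ζ (m+1) 1 1 * rsP ζ m 1 1)⁻¹ := by
  have hU := U_ne_zero ζ m
  have hU' := U_ne_zero ζ (m+1)
  have h2 : rsP ζ (m+1) 1 0 * rsP ζ m 1 1 - rsP ζ m 1 0 * rsP ζ (m+1) 1 1
      = single (((m+1:ℕ)):ℤ) (-(starRingEnd ℂ) (ζ (m+1))) * (rsP ζ m).det := by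
    rw [G_succ, U_succ, Matrix.det_fin_two]
    ring
  have h1 : rsP ζ (m+1) 1 0 * (rsP ζ (m+1) 1 1)⁻¹ - rsP ζ m 1 0 * (rsP ζ m 1 1)⁻¹
      = (rsP ζ (m+1) 1 0 * rsP ζ m 1 1 - rsP ζ m 1 0 * rsP ζ (m+1) 1 1)
        * (rsP ζ (m+1) 1 1 * rsP ζ m 1 1)⁻¹ := by
    field_simp
  rw [h1, h2, det_rsP, single_mul_single, add_zero]

lemma UU_inv (m : ℕ) :
    (∀ k : ℤ, k < 0 → ((rsP ζ (m+1) 1 1 * rsP ζ m 1 1)⁻¹).coeff k = 0) ∧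
      ((rsP ζ (m+1) 1 1 * rsP ζ m 1 1)⁻¹).coeff 0 = 1 := by
  have h1 := (supp ζ (m+1)).2.2.2
  have h2 := (supp ζ m).2.2.2
  have h := mul_coeff_facts h1.1 h1.2 h2.1 h2.2
  exact inv_coeff h.1 h.2

lemma coeff_stable (n : ℕ) : ∀ m : ℕ, n ≤ m →
    (rsP ζ m 1 0 * (rsP ζ m 1 1)⁻¹).coeff (n : ℤ)
      = (rsP ζ n 1 0 * (rsP ζ n 1 1)⁻¹).coeff (n : ℤ) := by
  intro m
  induction m with
  | zero =>
    intro h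
    have : n = 0 := by omega
    subst this
    rfl
  | succ m ih =>
    intro h
    rcases Nat.lt_or_ge n (m+1) with hlt | hge
    · have hm : n ≤ m := by omega
      have hd := congrArg (fun x => HahnSeries.coeff x (n : ℤ)) (f_diff ζ m)
      simp only [HahnSeries.coeff_sub, Pi.sub_apply] at hd
      rw [single_mul_coeff, (UU_inv ζ m).1 _ (by push_cast; omega), mul_zero] at hd
      have heq : (rsP ζ (m+1) 1 0 * (rsP ζ (m+1) 1 1)⁻¹).coeff (n:ℤ)
          = (rsP ζ m 1 0 * (rsP ζ m 1 1)⁻¹).coeff (n:ℤ) := by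
        exact sub_eq_zero.mp hd
      rw [heq, ih hm]
    · have : n = m + 1 := by omega
      rw [this]

lemma coeff_main (n : ℕ) :
    (rsP ζ (n+1) 1 0 * (rsP ζ (n+1) 1 1)⁻¹).coeff ((n+1 : ℕ) : ℤ)
      = (rsP ζ n 1 0 * (rsP ζ n 1 1)⁻¹).coeff ((n+1 : ℕ) : ℤ)
        - (starRingEnd ℂ) (ζ (n+1)) * cdet ζ n := by
  have hd := congrArg (fun x => HahnSeries.coeff x ((n+1:ℕ) : ℤ)) (f_diff ζ n)
  simp only [HahnSeries.coeff_sub, Pi.sub_apply] at hd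
  rw [single_mul_coeff, sub_self, (UU_inv ζ n).2, mul_one] at hd
  linear_combination hd

lemma rsP_congr {ζ ζ' : ℕ → ℂ} (m : ℕ) (h : ∀ s, s ≤ m → ζ s = ζ' s) :
    rsP ζ m = rsP ζ' m := by
  induction m with
  | zero => rfl
  | succ m ih =>
    show rsM ζ (m+1) * rsP ζ m = rsM ζ' (m+1) * rsP ζ' m
    rw [ih (fun s hs => h s (by omega)), rsM, rsM, h (m+1) le_rfl]


noncomputable def triSeq {N : ℕ} (F : (Fin N → ℂ) → (Fin N → ℂ)) (ξ : Fin N → ℂ) :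
    ℕ → (Fin N → ℂ)
  | 0 => fun _ => 0
  | k+1 =>
    if h : k < N then
      Function.update (triSeq F ξ k) ⟨k, h⟩
        (Function.invFun
          (fun w : ℂ => F (Function.update (triSeq F ξ k) ⟨k, h⟩ w) ⟨k, h⟩) (ξ ⟨k, h⟩))
    else triSeq F ξ k

lemma triSeq_succ {N : ℕ} (F : (Fin N → ℂ) → (Fin N → ℂ)) (ξ : Fin N → ℂ) (k : ℕ) :
    triSeq F ξ (k+1) =
    if h : k < N then
      Function.update (triSeq F ξ k) ⟨k, h⟩
        (Function.invFun
          (fun w : ℂ => F (Function.update (triSeq F ξ k) ⟨k, h⟩ w) ⟨k, h⟩) (ξ ⟨k, h⟩))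
    else triSeq F ξ k := by
  rw [triSeq]

lemma triangular_bijective {N : ℕ} (F : (Fin N → ℂ) → (Fin N → ℂ))
    (H1 : ∀ ζ ζ' : Fin N → ℂ, ∀ n : Fin N,
      (∀ m : Fin N, m ≤ n → ζ m = ζ' m) → F ζ n = F ζ' n)
    (H2 : ∀ (ζ : Fin N → ℂ) (n : Fin N),
      Function.Bijective (fun w : ℂ => F (Function.update ζ n w) n)) :
    Function.Bijective F := by
  constructor
  · intro ζ ζ' h
    funext n
    have key : ∀ k : ℕ, ∀ n : Fin N, (n : ℕ) = k → ζ n = ζ' n := by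
      intro k
      induction k using Nat.strong_induction_on with
      | _ k ih =>
        intro n hn
        have hlt : ∀ m : Fin N, m < n → ζ m = ζ' m := fun m hm =>
          ih m ((Fin.lt_def.mp hm).trans_eq hn) m rfl
        have e2 : F ζ' n = F (Function.update ζ n (ζ' n)) n := by
          apply H1
          intro m hm
          rcases eq_or_lt_of_le hm with heq | hlt'
          · subst heq
            simp
          · rw [Function.update_of_ne (Fin.ne_of_lt hlt')]
            exact (hlt m hlt').symm
        have e1 : F ζ n = F (Function.update ζ n (ζ n)) n := by
          rw [Function.update_eq_self]
        have hfe : F (Function.update ζ n (ζ n)) n = F (Function.update ζ n (ζ' n)) n := by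
          rw [← e1, ← e2]
          exact congrFun h n
        exact (H2 ζ n).1 hfe
    exact key (↑n) n rfl
  · intro ξ
    set seq := triSeq F ξ with hseq
    have step_agree : ∀ k, ∀ m : Fin N, (m : ℕ) < k → seq (k+1) m = seq k m := by
      intro k m hm
      rw [hseq, triSeq_succ]
      split_ifs with h
      · exact Function.update_of_ne (by
          intro hmk
          rw [hmk] at hm
          simp at hm) _ _
      · rfl
    have stab : ∀ j k, k ≤ j → ∀ m : Fin N, (m : ℕ) < k → seq j m = seq k m := by
      intro j
      induction j with
      | zero => intro k hk m hm; omega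
      | succ j ihj =>
        intro k hk m hm
        rcases Nat.lt_or_ge k (j+1) with h | h
        · rw [step_agree j m (by omega), ihj k (by omega) m hm]
        · have : k = j + 1 := by omega
          rw [this]
    refine ⟨seq N, ?_⟩
    funext n
    obtain ⟨k, hkN⟩ := n
    set n' : Fin N := ⟨k, hkN⟩ with hn'
    set w := Function.invFun
      (fun w : ℂ => F (Function.update (seq k) n' w) n') (ξ n') with hw
    have hstep : seq (k+1) = Function.update (seq k) n' w := by
      rw [hseq, triSeq_succ, dif_pos hkN]
    have hagree : ∀ m : Fin N, m ≤ n' → seq N m = Function.update (seq k) n' w m := by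
      intro m hm
      rcases eq_or_lt_of_le hm with heq | hlt
      · subst heq
        exact (stab N (k+1) (by omega) n' (by simp [hn'])).trans
          (congrFun hstep n')
      · have hmk : (m : ℕ) < k := hlt
        rw [Function.update_of_ne (Fin.ne_of_lt hlt),
          stab N (k+1) (by omega) m (by omega)]
        exact step_agree k m hmk
    rw [H1 _ _ n' hagree, hw]
    exact Function.invFun_eq ((H2 (seq k) n').2 (ξ n'))

end Xi

/-- The map `(ζ₁,…,ζ_N) ↦ (ξ₁,…,ξ_N)`, where `ξ_n` is the `n`-th Taylor coefficient
of the quotient `γ₂/δ₂` of the `(2,1)` and `(2,2)` entries of the truncated product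
at level `N`, is a bijection from `ℂ^N` to `ℂ^N`. -/
theorem xi_map_bijective (N : ℕ) :
    Function.Bijective (fun ζ : Fin N → ℂ => fun n : Fin N =>
      ((rsP (rsExt N ζ) N) 1 0 * ((rsP (rsExt N ζ) N) 1 1)⁻¹).coeff ((n : ℕ) + 1 : ℤ)) := by
  apply Xi.triangular_bijective
  · -- dependence only on earlier coordinates
    intro ζ ζ' n h
    have hext : ∀ s, s ≤ (n:ℕ)+1 → rsExt N ζ s = rsExt N ζ' s := by
      intro s hs
      unfold rsExt
      split_ifs with hc
      · exact h ⟨s-1, by omega⟩ (by rw [Fin.le_def]; simp; omega)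
      · rfl
    have hcast : (((n:ℕ) : ℤ) + 1 : ℤ) = ((((n:ℕ) + 1 : ℕ)) : ℤ) := by push_cast; ring
    rw [hcast,
      Xi.coeff_stable (rsExt N ζ) ((n:ℕ)+1) N (by omega),
      Xi.coeff_stable (rsExt N ζ') ((n:ℕ)+1) N (by omega),
      Xi.rsP_congr ((n:ℕ)+1) hext]
  · -- bijectivity in each slice
    intro ζ n
    have hkN : (n:ℕ) < N := n.isLt
    set k := (n:ℕ) with hkdef
    set C := (rsP (rsExt N ζ) k 1 0 * (rsP (rsExt N ζ) k 1 1)⁻¹).coeff (((k+1:ℕ)):ℤ) with hC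
    set D := Xi.cdet (rsExt N ζ) k with hD
    have hDne : D ≠ 0 := Xi.cdet_ne_zero _ _
    have hkey : ∀ w : ℂ,
        ((rsP (rsExt N (Function.update ζ n w)) N) 1 0
          * ((rsP (rsExt N (Function.update ζ n w)) N) 1 1)⁻¹).coeff (((k:ℕ) : ℤ) + 1)
        = C - (starRingEnd ℂ) w * D := by
      intro w
      have hext2 : ∀ s, s ≤ k → rsExt N (Function.update ζ n w) s = rsExt N ζ s := by
        intro s hs
        unfold rsExt
        split_ifs with hc
        · rw [Function.update_of_ne]
          intro hcontra
          have := congrArg Fin.val hcontra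
          simp only [hkdef] at this
          omega
        · rfl
      have hP : rsP (rsExt N (Function.update ζ n w)) k = rsP (rsExt N ζ) k :=
        Xi.rsP_congr k hext2
      have hcd : Xi.cdet (rsExt N (Function.update ζ n w)) k = D := by
        rw [hD, Xi.cdet, Xi.cdet]
        refine Finset.prod_congr rfl (fun s hs => ?_)
        rw [hext2 (s+1) (by simpa using Nat.succ_le_of_lt (Finset.mem_range.mp hs))]
      have hval : rsExt N (Function.update ζ n w) (k+1) = w := by
        unfold rsExt
        rw [dif_pos ⟨by omega, by omega⟩]
        have hfin : (⟨k+1-1, by omega⟩ : Fin N) = n := by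
          apply Fin.ext
          simp [hkdef]
        rw [hfin, Function.update_self]
      have hcast : (((k:ℕ) : ℤ) + 1 : ℤ) = ((((k:ℕ) + 1 : ℕ)) : ℤ) := by push_cast; ring
      rw [hcast, Xi.coeff_stable (rsExt N (Function.update ζ n w)) (k+1) N (by omega),
        Xi.coeff_main, hP, hval, hcd, hC]
    have hfun : (fun w : ℂ =>
        ((rsP (rsExt N (Function.update ζ n w)) N) 1 0
          * ((rsP (rsExt N (Function.update ζ n w)) N) 1 1)⁻¹).coeff (((k:ℕ) : ℤ) + 1))
        = fun w : ℂ => C - (starRingEnd ℂ) w * D := funext hkey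
    rw [hfun]
    constructor
    · intro x y hxy
      have h1 : (starRingEnd ℂ) x * D = (starRingEnd ℂ) y * D := by
        linear_combination -hxy
      have h2 : (starRingEnd ℂ) x = (starRingEnd ℂ) y := mul_right_cancel₀ hDne h1
      exact (starRingEnd ℂ).injective h2
    · intro y
      refine ⟨(starRingEnd ℂ) ((C - y) / D), ?_⟩
      show C - (starRingEnd ℂ) ((starRingEnd ℂ) ((C - y) / D)) * D = y
      rw [Complex.conj_conj]
      field_simp
      ring
end
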